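/- Let Δ be a map on signals such that for every signal x in L²[0,∞), the image Δx is again a signal in L²[0,∞). Then the following are equivalent: (i) for all τ ∈ ℝ and all signals x in L²[0,∞), |∫₀^∞ x(t+τ)·(Δx)(t) dt| ≤ ∫₀^∞ x(t)·(Δx)(t) dt; (ii) for every z ∈ L¹(ℝ) with ‖z‖₁ ≤ 1 (no sign restriction on z), and every signal x in L²[0,∞), one has ⟨x, Δx − z∗(Δx)⟩ ≥ 0. -/

import Mathlib

open MeasureTheory Set Filter Topology

/-- A signal in L²[0,∞): square integrable over ℝ and vanishing on (−∞,0). -/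
def IsSignal (x : ℝ → ℝ) : Prop :=
  MemLp x 2 volume ∧ ∀ t < (0:ℝ), x t = 0

/-- Convolution (z∗w)(t) = ∫ z(s)·w(t−s) ds. -/
noncomputable def conv (z w : ℝ → ℝ) : ℝ → ℝ := fun t => ∫ s, z s * w (t - s)

section Aux

variable {x y z : ℝ → ℝ}

/-- Correlation function R(τ) = ∫ x(t+τ) y(t) dt. -/
noncomputable def corr (x y : ℝ → ℝ) : ℝ → ℝ := fun τ => ∫ t, x (t + τ) * y t

lemma integrable_mul2 (hx : MemLp x 2 (volume : Measure ℝ)) (hy : MemLp y 2 volume) :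
    Integrable (fun t => x t * y t) volume := by
  have h := MeasureTheory.L2.integrable_inner (𝕜 := ℝ) (hx.toLp x) (hy.toLp y)
  refine h.congr ?_
  filter_upwards [hx.coeFn_toLp, hy.coeFn_toLp] with t h1 h2
  simp [h1, h2, RCLike.inner_apply]; ring

lemma memLp_sub_right (hy : MemLp y 2 (volume : Measure ℝ)) (s : ℝ) :
    MemLp (fun t => y (t - s)) 2 volume :=
  hy.comp_measurePreserving (measurePreserving_sub_right volume s)

lemma corr_continuous (hx : MemLp x 2 (volume : Measure ℝ)) (hy : MemLp y 2 volume) :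
    Continuous (corr x y) := by
  have hGm : ∀ τ : ℝ, MeasurePreserving (fun t => t + τ) (volume : Measure ℝ) volume :=
    fun τ => measurePreserving_add_right volume τ
  let G : ℝ → C(ℝ, ℝ) := fun τ => ⟨fun t => t + τ, by continuity⟩
  have hGc : Continuous G :=
    ContinuousMap.continuous_of_continuous_uncurry _ (continuous_snd.add continuous_fst)
  have hTr : Continuous fun τ => Lp.compMeasurePreserving (⇑(G τ)) (hGm τ) (hx.toLp x) :=
    Continuous.compMeasurePreservingLp continuous_const hGc hGm (by norm_num)
  have hin : Continuous fun τ =>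
      (inner ℝ (Lp.compMeasurePreserving (⇑(G τ)) (hGm τ) (hx.toLp x)) (hy.toLp y) : ℝ) :=
    hTr.inner continuous_const
  refine hin.congr fun τ => ?_
  rw [MeasureTheory.L2.inner_def]
  refine integral_congr_ae ?_
  have h1 : ⇑(Lp.compMeasurePreserving (⇑(G τ)) (hGm τ) (hx.toLp x))
      =ᵐ[volume] fun t => x (t + τ) := by
    refine (Lp.coeFn_compMeasurePreserving _ _).trans ?_
    exact (hx.coeFn_toLp).comp_tendsto (hGm τ).quasiMeasurePreserving.tendsto_ae
  filter_upwards [h1, hy.coeFn_toLp] with t ht1 ht2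
  simp only [RCLike.inner_apply, conj_trivial]
  rw [ht1, ht2, mul_comm]

lemma holder_bound (hx : MemLp x 2 (volume : Measure ℝ)) (hy : MemLp y 2 volume) (s : ℝ) :
    ∫ t, ‖x t‖ * ‖y (t - s)‖ ≤
      (∫ t, ‖x t‖ ^ (2:ℝ)) ^ ((1:ℝ)/2) * (∫ t, ‖y t‖ ^ (2:ℝ)) ^ ((1:ℝ)/2) := by
  have hpq : Real.HolderConjugate 2 2 := Real.holderConjugate_iff.mpr ⟨one_lt_two, by norm_num⟩
  have h2 : ENNReal.ofReal (2:ℝ) = 2 := by norm_num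
  have h := integral_mul_norm_le_Lp_mul_Lq (μ := volume) hpq (h2 ▸ hx)
    (h2 ▸ memLp_sub_right hy s)
  have htr : ∫ t, ‖y (t - s)‖ ^ (2:ℝ) = ∫ t, ‖y t‖ ^ (2:ℝ) := by
    simpa using integral_sub_right_eq_self (fun t => ‖y t‖ ^ (2:ℝ)) s
  rw [htr] at h
  exact h

lemma fubini_key (hz : Integrable z (volume : Measure ℝ))
    (hx : MemLp x 2 (volume : Measure ℝ)) (hy : MemLp y 2 volume) :
    Integrable (fun t => x t * conv z y t) volume ∧
      ∫ t, x t * conv z y t = ∫ s, z s * corr x y s := by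
  set C : ℝ := (∫ t, ‖x t‖ ^ (2:ℝ)) ^ ((1:ℝ)/2) * (∫ t, ‖y t‖ ^ (2:ℝ)) ^ ((1:ℝ)/2) with hC
  set F : ℝ × ℝ → ℝ := fun p => x p.1 * (z p.2 * y (p.1 - p.2)) with hF
  have hF1 : AEStronglyMeasurable (fun p : ℝ × ℝ => z p.2 * y (p.1 - p.2))
      (volume.prod volume) := by
    have := MeasureTheory.AEStronglyMeasurable.convolution_integrand
      (L := ContinuousLinearMap.mul ℝ ℝ) hz.aestronglyMeasurable hy.aestronglyMeasurable
    simpa using this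
  have hFx : AEStronglyMeasurable (fun p : ℝ × ℝ => x p.1) (volume.prod volume) :=
    hx.aestronglyMeasurable.comp_quasiMeasurePreserving
      MeasureTheory.Measure.quasiMeasurePreserving_fst
  have hFm : AEStronglyMeasurable F (volume.prod volume) := hFx.mul hF1
  have hslice : ∀ s : ℝ, Integrable (fun t => F (t, s)) volume := by
    intro s
    have h1 : Integrable (fun t => x t * y (t - s)) volume :=
      integrable_mul2 hx (memLp_sub_right hy s)
    refine (h1.const_mul (z s)).congr (Eventually.of_forall fun t => ?_)
    simp only [hF]; ring
  have hnorm : ∀ s : ℝ, ∫ t, ‖F (t, s)‖ ≤ ‖z s‖ * C := by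
    intro s
    have h1 : ∫ t, ‖F (t, s)‖ = ‖z s‖ * ∫ t, ‖x t‖ * ‖y (t - s)‖ := by
      rw [← integral_const_mul]
      refine integral_congr_ae (Eventually.of_forall fun t => ?_)
      simp only [hF, Real.norm_eq_abs, abs_mul]; ring
    rw [h1, hC]
    exact mul_le_mul_of_nonneg_left (holder_bound hx hy s) (norm_nonneg _)
  have hFint : Integrable F (volume.prod volume) := by
    refine (integrable_prod_iff' hFm).2 ⟨Eventually.of_forall hslice, ?_⟩
    refine Integrable.mono' (hz.norm.mul_const C)
      hFm.prod_swap.norm.integral_prod_right' (Eventually.of_forall fun s => ?_)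
    rw [Real.norm_of_nonneg (integral_nonneg fun t => norm_nonneg _)]
    exact hnorm s
  have hpt : ∀ t : ℝ, ∫ s, F (t, s) = x t * conv z y t := by
    intro t
    simp only [hF, conv]
    exact integral_const_mul (x t) _
  constructor
  · exact hFint.integral_prod_left.congr (Eventually.of_forall fun t => hpt t)
  · have hswap : ∫ t, ∫ s, F (t, s) = ∫ s, ∫ t, F (t, s) :=
      integral_integral_swap (by exact hFint)
    have hleft : ∫ t, x t * conv z y t = ∫ t, ∫ s, F (t, s) :=
      integral_congr_ae (Eventually.of_forall fun t => (hpt t).symm)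
    rw [hleft, hswap]
    refine integral_congr_ae (Eventually.of_forall fun s => ?_)
    show (∫ t, F (t, s)) = z s * corr x y s
    have h1 : ∫ t, F (t, s) = z s * ∫ t, x t * y (t - s) := by
      rw [← integral_const_mul]
      refine integral_congr_ae (Eventually.of_forall fun t => ?_)
      simp only [hF]; ring
    rw [h1]
    congr 1
    have h2 := integral_add_right_eq_self (μ := volume) (fun t => x t * y (t - s)) s
    simp only [add_sub_cancel_right] at h2
    simp only [corr]
    rw [h2]

lemma split_integral (hz : Integrable z (volume : Measure ℝ))
    (hx : MemLp x 2 (volume : Measure ℝ)) (hy : MemLp y 2 volume) :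
    ∫ t, x t * (y t - conv z y t) = (∫ t, x t * y t) - ∫ s, z s * corr x y s := by
  have hkey := fubini_key hz hx hy
  rw [show (fun t => x t * (y t - conv z y t))
      = fun t => x t * y t - x t * conv z y t from funext fun t => by ring]
  rw [integral_sub (integrable_mul2 hx hy) hkey.1, hkey.2]

lemma ici_eq (hy0 : ∀ t < (0:ℝ), y t = 0) (f : ℝ → ℝ) :
    ∫ t in Ici (0:ℝ), f t * y t = ∫ t, f t * y t :=
  setIntegral_eq_integral_of_forall_compl_eq_zero fun t ht => by
    rw [hy0 t (not_le.1 (by simpa [mem_Ici] using ht)), mul_zero]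

end Aux

theorem zames_falb_iqc_characterization_odd
    (Δ : (ℝ → ℝ) → (ℝ → ℝ))
    (hΔ : ∀ x, IsSignal x → IsSignal (Δ x)) :
    (∀ (τ : ℝ) (x : ℝ → ℝ), IsSignal x →
      |∫ t in Ici (0:ℝ), x (t + τ) * Δ x t| ≤ ∫ t in Ici (0:ℝ), x t * Δ x t)
    ↔
    (∀ z : ℝ → ℝ, Integrable z → (∫ t, |z t|) ≤ 1 →
      ∀ x : ℝ → ℝ, IsSignal x →
        0 ≤ ∫ t, x t * (Δ x t - conv z (Δ x) t)) := by
  constructor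
  · intro hi z hz hz1 x hxs
    obtain ⟨hx, hx0⟩ := hxs
    obtain ⟨hy, hy0⟩ := hΔ x ⟨hx, hx0⟩
    rw [split_integral hz hx hy]
    have hR : ∀ τ : ℝ, |corr x (Δ x) τ| ≤ ∫ t, x t * Δ x t := by
      intro τ
      have h := hi τ x ⟨hx, hx0⟩
      rw [ici_eq hy0 (fun t => x (t + τ)), ici_eq hy0 x] at h
      exact h
    have hR0 : 0 ≤ ∫ t, x t * Δ x t := by
      have h := hR 0
      simp only [corr, add_zero] at h
      exact (abs_nonneg _).trans h
    have hcont : Continuous (corr x (Δ x)) := corr_continuous hx hy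
    have hb : ∀ s : ℝ, z s * corr x (Δ x) s ≤ |z s| * (∫ t, x t * Δ x t) := fun s =>
      (le_abs_self _).trans
        (by rw [abs_mul]; exact mul_le_mul_of_nonneg_left (hR s) (abs_nonneg _))
    have hzR : Integrable (fun s => z s * corr x (Δ x) s) volume := by
      refine Integrable.mono' (hz.abs.mul_const (∫ t, x t * Δ x t))
        (hz.aestronglyMeasurable.mul hcont.aestronglyMeasurable)
        (Eventually.of_forall fun s => ?_)
      rw [Real.norm_eq_abs, abs_mul]
      exact mul_le_mul_of_nonneg_left (hR s) (abs_nonneg _)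
    have h1 : ∫ s, z s * corr x (Δ x) s ≤ ∫ s, |z s| * (∫ t, x t * Δ x t) :=
      integral_mono hzR (hz.abs.mul_const _) hb
    have h2 : ∫ s, |z s| * (∫ t, x t * Δ x t) = (∫ s, |z s|) * (∫ t, x t * Δ x t) :=
      integral_mul_const _ _
    have h3 : (∫ s, |z s|) * (∫ t, x t * Δ x t) ≤ 1 * (∫ t, x t * Δ x t) :=
      mul_le_mul_of_nonneg_right hz1 hR0
    linarith
  · intro hii τ x hxs
    obtain ⟨hx, hx0⟩ := hxs
    obtain ⟨hy, hy0⟩ := hΔ x ⟨hx, hx0⟩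
    rw [ici_eq hy0 (fun t => x (t + τ)), ici_eq hy0 x]
    show |corr x (Δ x) τ| ≤ ∫ t, x t * Δ x t
    have hcont : Continuous (corr x (Δ x)) := corr_continuous hx hy
    have hmain : ∀ c : ℝ, |c| = 1 → c * corr x (Δ x) τ ≤ ∫ t, x t * Δ x t := by
      intro c hc
      have hineq : ∀ u ∈ Ioi τ,
          c * ((u - τ)⁻¹ * ∫ s in Ioc τ u, corr x (Δ x) s) ≤ ∫ t, x t * Δ x t := by
        intro u hu
        rw [mem_Ioi] at hu
        have huτ : (0:ℝ) < u - τ := sub_pos.2 hu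
        set zf : ℝ → ℝ := (Ioc τ u).indicator (fun _ => c * (u - τ)⁻¹) with hzf
        have hzint : Integrable zf volume := by
          rw [hzf, integrable_indicator_iff measurableSet_Ioc]
          refine integrableOn_const ?_
          rw [Real.volume_Ioc]; exact ENNReal.ofReal_ne_top
        have habs : (fun s => |zf s|) = (Ioc τ u).indicator (fun _ => |c * (u - τ)⁻¹|) := by
          funext s
          by_cases h : s ∈ Ioc τ u <;> simp [hzf, h]
        have hz1 : (∫ s, |zf s|) ≤ 1 := by
          rw [habs, integral_indicator measurableSet_Ioc, setIntegral_const,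
            Real.volume_real_Ioc_of_le hu.le, smul_eq_mul,
            abs_mul, hc, one_mul, abs_inv, abs_of_pos huτ, mul_inv_cancel₀ huτ.ne']
        have h2 := hii zf hzint hz1 x ⟨hx, hx0⟩
        rw [split_integral hzint hx hy] at h2
        have h3 : ∫ s, zf s * corr x (Δ x) s
            = c * ((u - τ)⁻¹ * ∫ s in Ioc τ u, corr x (Δ x) s) := by
          have he : (fun s => zf s * corr x (Δ x) s)
              = (Ioc τ u).indicator (fun s => c * (u - τ)⁻¹ * corr x (Δ x) s) := by
            funext s
            by_cases h : s ∈ Ioc τ u <;> simp [hzf, h]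
          rw [he, integral_indicator measurableSet_Ioc, MeasureTheory.integral_const_mul]
          ring
        rw [h3] at h2
        linarith
      have hlim : Tendsto (fun u => (u - τ)⁻¹ * ∫ s in Ioc τ u, corr x (Δ x) s)
          (𝓝[>] τ) (𝓝 (corr x (Δ x) τ)) := by
        have hderiv : HasDerivAt (fun u => ∫ s in τ..u, corr x (Δ x) s)
            (corr x (Δ x) τ) τ :=
          intervalIntegral.integral_hasDerivAt_right (hcont.intervalIntegrable τ τ)
            hcont.stronglyMeasurable.stronglyMeasurableAtFilter hcont.continuousAt
        have h4 := (hasDerivAt_iff_tendsto_slope.1 hderiv).mono_left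
          (nhdsWithin_mono τ (fun u (hu : u ∈ Ioi τ) => hu.ne'))
        refine Filter.Tendsto.congr' ?_ h4
        filter_upwards [self_mem_nhdsWithin] with u hu
        rw [mem_Ioi] at hu
        rw [slope_def_field, intervalIntegral.integral_same, sub_zero,
          intervalIntegral.integral_of_le hu.le, div_eq_inv_mul]
      have hfin := le_of_tendsto (hlim.const_mul c)
        (eventually_mem_nhdsWithin.mono fun u hu => hineq u hu)
      exact hfin
    have h1 := hmain 1 (by norm_num)
    have h2 := hmain (-1) (by norm_num)
    rw [one_mul] at h1
    rw [neg_one_mul] at h2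
    exact abs_le.2 ⟨by linarith, h1⟩
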